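/- Suppose the cluster size distribution is a shifted negative binomial: μ_k = C(k+r−2, k−1) (1−p)^r p^{k−1} for k ≥ 1 and μ_0 = 0, where p ∈ (0,1), r > 0 is real, and C(t, m) = (t)_m / m! with (t)_m the falling factorial. Then for every integer n ≥ 1, P[E_n] = p^n Σ_{k=1}^{n} ((1−p)^r / p)^k · C(n + k(r−1) − 1, n−k). -/

import Mathlib

open MeasureTheory ProbabilityTheory Finset

/-- Generalized binomial coefficient `C(t, m) = t(t−1)⋯(t−m+1)/m!` for real `t`
and natural `m`. -/
noncomputable def genChoose (t : ℝ) (m : ℕ) : ℝ :=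
  (∏ i ∈ Finset.range m, (t - i)) / m.factorial

lemma descPoch_smeval_real (t : ℝ) : ∀ m : ℕ,
    (descPochhammer ℤ m).smeval t = ∏ i ∈ Finset.range m, (t - i)
  | 0 => by simp [descPochhammer_zero, Polynomial.smeval_one]
  | (m + 1) => by
      rw [descPochhammer_succ_right, Polynomial.smeval_mul, descPoch_smeval_real t m,
        Polynomial.smeval_sub, Polynomial.smeval_X, Polynomial.smeval_natCast,
        Finset.prod_range_succ]
      ring

lemma genChoose_eq_ringChoose (t : ℝ) (m : ℕ) : genChoose t m = Ring.choose t m := by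
  have h := Ring.descPochhammer_eq_factorial_smul_choose t m
  rw [descPoch_smeval_real] at h
  rw [genChoose, h, nsmul_eq_mul, mul_div_cancel_left₀]
  exact_mod_cast m.factorial_ne_zero

lemma genChoose_vandermonde (x y : ℝ) (m : ℕ) :
    genChoose (x + y) m = ∑ j ∈ Finset.range (m + 1), genChoose x j * genChoose y (m - j) := by
  rw [genChoose_eq_ringChoose, Ring.add_choose_eq m (Commute.all x y),
    Finset.Nat.sum_antidiagonal_eq_sum_range_succ (fun i j => Ring.choose x i * Ring.choose y j)]
  simp [genChoose_eq_ringChoose]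

lemma genChoose_reflect (t : ℝ) (m : ℕ) :
    genChoose t m = (-1) ^ m * genChoose ((m : ℝ) - 1 - t) m := by
  unfold genChoose
  rw [← mul_div_assoc]
  congr 1
  calc ∏ i ∈ Finset.range m, (t - i)
      = ∏ i ∈ Finset.range m, (-1 * ((m:ℝ) - 1 - t - ((m - 1 - i : ℕ) : ℝ))) := by
        refine Finset.prod_congr rfl fun i hi => ?_
        have hi' : i < m := Finset.mem_range.mp hi
        have h1 : 1 + i ≤ m := by omega
        have hc : ((m - 1 - i : ℕ) : ℝ) = (m : ℝ) - 1 - i := by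
          rw [Nat.sub_sub, Nat.cast_sub h1]
          push_cast
          ring
        rw [hc]; ring
    _ = (-1) ^ m * ∏ i ∈ Finset.range m, ((m:ℝ) - 1 - t - ((m - 1 - i : ℕ) : ℝ)) := by
        rw [Finset.prod_mul_distrib, Finset.prod_const, Finset.card_range]
    _ = (-1) ^ m * ∏ i ∈ Finset.range m, ((m:ℝ) - 1 - t - i) := by
        rw [Finset.prod_range_reflect (fun i => ((m:ℝ) - 1 - t - i)) m]

lemma key_sum (r : ℝ) (k n : ℕ) (hkn : k + 1 ≤ n) :
    ∑ s ∈ Finset.Icc 1 (n - k),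
      genChoose ((n : ℝ) - s + k * (r - 1) - 1) (n - s - k) * genChoose ((s : ℝ) + r - 2) (s - 1)
    = genChoose ((n : ℝ) + ((k : ℝ) + 1) * (r - 1) - 1) (n - (k + 1)) := by
  set m := n - (k + 1) with hm
  have hmk : n - k = m + 1 := by omega
  have hmcast : (m : ℝ) = (n : ℝ) - k - 1 := by
    have h : (m : ℕ) + (k + 1) = n := by omega
    have h2 := congrArg (Nat.cast : ℕ → ℝ) h
    push_cast at h2; linarith
  have hIcc : Finset.Icc 1 (n - k) = Finset.Ico 1 (m + 2) := by
    ext x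
    simp only [Finset.mem_Icc, Finset.mem_Ico]
    omega
  rw [hIcc, Finset.sum_Ico_eq_sum_range]
  have hrange : m + 2 - 1 = m + 1 := by omega
  rw [hrange]
  have hterm : ∀ j ∈ Finset.range (m + 1),
      genChoose ((n : ℝ) - (1 + j : ℕ) + k * (r - 1) - 1) (n - (1 + j) - k) *
        genChoose (((1 + j : ℕ) : ℝ) + r - 2) ((1 + j) - 1)
      = (-1) ^ m * (genChoose (-r) j * genChoose (-(k * r)) (m - j)) := by
    intro j hj
    have hjm : j ≤ m := by simpa using Nat.lt_succ_iff.mp (Finset.mem_range.mp hj)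
    have h1 : (1 + j) - 1 = j := by omega
    have h2 : n - (1 + j) - k = m - j := by omega
    have e1 : genChoose (((1 + j : ℕ) : ℝ) + r - 2) j = (-1) ^ j * genChoose (-r) j := by
      rw [genChoose_reflect]
      have : (j : ℝ) - 1 - (((1 + j : ℕ) : ℝ) + r - 2) = -r := by push_cast; ring
      rw [this]
    have e2 : genChoose ((n : ℝ) - (1 + j : ℕ) + k * (r - 1) - 1) (m - j)
        = (-1) ^ (m - j) * genChoose (-(k * r)) (m - j) := by
      rw [genChoose_reflect]
      have hc : ((m - j : ℕ) : ℝ) = (m : ℝ) - j := by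
        rw [Nat.cast_sub hjm]
      have : ((m - j : ℕ) : ℝ) - 1 - ((n : ℝ) - (1 + j : ℕ) + k * (r - 1) - 1) = -(k * r) := by
        rw [hc, hmcast]; push_cast; ring
      rw [this]
    rw [h1, h2, e1, e2]
    have hsgn : ((-1 : ℝ)) ^ (m - j) * (-1) ^ j = (-1) ^ m := by
      rw [← pow_add, Nat.sub_add_cancel hjm]
    calc (-1) ^ (m - j) * genChoose (-(k * r)) (m - j) * ((-1) ^ j * genChoose (-r) j)
        = ((-1 : ℝ)) ^ (m - j) * (-1) ^ j * (genChoose (-r) j * genChoose (-(k * r)) (m - j)) := by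
          ring
      _ = (-1) ^ m * (genChoose (-r) j * genChoose (-(k * r)) (m - j)) := by rw [hsgn]
  rw [Finset.sum_congr rfl hterm, ← Finset.mul_sum, ← genChoose_vandermonde (-r) (-(k * r)) m]
  rw [genChoose_reflect ((n : ℝ) + ((k : ℝ) + 1) * (r - 1) - 1) m]
  have : (m : ℝ) - 1 - ((n : ℝ) + ((k : ℝ) + 1) * (r - 1) - 1) = -r + -(k * r) := by
    rw [hmcast]; ring
  rw [this]


/-- If cluster sizes are shifted negative binomial,
`μ_k = C(k+r−2, k−1)(1−p)^r p^{k−1}` for `k ≥ 1` with `p ∈ (0,1)` and `r > 0`, then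
for every `n ≥ 1`,
`P[E_n] = p^n ∑_{k=1}^n ((1−p)^r/p)^k C(n + k(r−1) − 1, n−k)`. -/
theorem esc_nb_prob_event
    {Ω : Type*} [MeasurableSpace Ω] (P : Measure Ω) [IsProbabilityMeasure P]
    (S : ℕ → Ω → ℕ)
    (hmeas : ∀ i, Measurable (S i))
    (hindep : iIndepFun S P)
    (hident : ∀ i, IdentDistrib (S i) (S 0) P P)
    (hpos : ∀ i ω, 0 < S i ω)
    (μ : ℕ → ℝ)
    (hμ : ∀ s, μ s = (P {ω | S 0 ω = s}).toReal)
    (E : ℕ → Set Ω)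
    (hE : ∀ n, E n = {ω | ∃ K, ∑ j ∈ Finset.range K, S j ω = n})
    (p r : ℝ) (hp0 : 0 < p) (hp1 : p < 1) (hr : 0 < r)
    (hform : ∀ k : ℕ, 1 ≤ k →
      μ k = genChoose ((k : ℝ) + r - 2) (k - 1) * (1 - p) ^ r * p ^ (k - 1))
    (n : ℕ) (hn : 1 ≤ n) :
    (P (E n)).toReal
      = p ^ n * ∑ k ∈ Finset.Icc 1 n,
          ((1 - p) ^ r / p) ^ k *
            genChoose ((n : ℝ) + k * (r - 1) - 1) (n - k) := by
  classical
  set A : ℝ := (1 - p) ^ r with hA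
  set T : ℕ → Ω → ℕ := fun k ω => ∑ j ∈ Finset.range k, S j ω with hT
  have hTmeas : ∀ k, Measurable (T k) := fun k => Finset.measurable_sum _ fun j _ => hmeas j
  have hTsucc : ∀ k ω, T (k + 1) ω = T k ω + S k ω := fun k ω => Finset.sum_range_succ _ _
  have hTge : ∀ k ω, k ≤ T k ω := by
    intro k ω
    calc k = ∑ _j ∈ Finset.range k, 1 := by simp
    _ ≤ T k ω := Finset.sum_le_sum fun j _ => hpos j ω
  have hTstrict : ∀ (ω : Ω) {k k' : ℕ}, k < k' → T k ω < T k' ω := by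
    intro ω k k' h
    have hsum : T k ω + ∑ j ∈ Finset.Ico k k', S j ω = T k' ω :=
      Finset.sum_range_add_sum_Ico _ (le_of_lt h)
    have hpos' : 0 < ∑ j ∈ Finset.Ico k k', S j ω :=
      Finset.sum_pos (fun j _ => hpos j ω) (Finset.nonempty_Ico.mpr h)
    omega
  have hμ0 : μ 0 = 0 := by
    rw [hμ]
    have : {ω | S 0 ω = 0} = ∅ := by
      ext ω; simpa using (hpos 0 ω).ne'
    simp [this]
  have hident' : ∀ i s, P {ω | S i ω = s} = P {ω | S 0 ω = s} := by
    intro i s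
    have h := (hident i).measure_mem_eq (MeasurableSet.singleton s)
    simpa [Set.preimage, Set.mem_singleton_iff] using h
  have hTzero : ∀ k m : ℕ, m < k → P {ω | T k ω = m} = 0 := by
    intro k m h
    have : {ω | T k ω = m} = ∅ := by
      ext ω
      simp only [Set.mem_setOf_eq, Set.mem_empty_iff_false, iff_false]
      intro hω
      have := hTge k ω
      omega
    simp [this]
  -- convolution identity
  have hconv : ∀ k m : ℕ, P {ω | T (k + 1) ω = m}
      = ∑ s ∈ Finset.range (m + 1), P {ω | T k ω = m - s} * P {ω | S 0 ω = s} := by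
    intro k m
    have hsplit : {ω | T (k + 1) ω = m}
        = ⋃ s ∈ Finset.range (m + 1), ({ω | T k ω = m - s} ∩ {ω | S k ω = s}) := by
      ext ω
      simp only [Set.mem_setOf_eq, Set.mem_iUnion, Set.mem_inter_iff, Finset.mem_range,
        exists_prop]
      constructor
      · intro h
        have h2 := hTsucc k ω
        exact ⟨S k ω, by omega, by omega, rfl⟩
      · rintro ⟨s, hs, h1, h2⟩
        have h3 := hTsucc k ω
        omega
    rw [hsplit, measure_biUnion_finset]
    · refine Finset.sum_congr rfl fun s hs => ?_
      have hik : IndepFun (T k) (S k) P := by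
        have hTeq : T k = ∑ j ∈ Finset.range k, S j := by
          ext ω; simp [hT]
        rw [hTeq]
        exact hindep.indepFun_sum_range_succ hmeas k
      have h := hik.measure_inter_preimage_eq_mul {m - s} {s}
        (MeasurableSet.singleton _) (MeasurableSet.singleton _)
      have hpre1 : T k ⁻¹' {m - s} = {ω | T k ω = m - s} := by
        ext ω; simp [Set.preimage]
      have hpre2 : S k ⁻¹' {s} = {ω | S k ω = s} := by
        ext ω; simp [Set.preimage]
      rw [hpre1, hpre2] at h
      rw [h, hident' k s]
    · intro s hs t ht hst
      simp only [Function.onFun]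
      apply Set.disjoint_left.mpr
      rintro ω ⟨-, h2⟩ ⟨-, h4⟩
      apply hst
      simp only [Set.mem_setOf_eq] at h2 h4
      omega
    · intro s hs
      exact ((hTmeas k) (MeasurableSet.singleton _)).inter ((hmeas k) (MeasurableSet.singleton _))
  -- the main induction
  have key : ∀ k, 1 ≤ k → ∀ m : ℕ, k ≤ m →
      (P {ω | T k ω = m}).toReal
        = genChoose ((m : ℝ) + k * (r - 1) - 1) (m - k) * A ^ k * p ^ (m - k) := by
    intro k
    induction k with
    | zero => omega
    | succ k ih =>
      intro _ m hm
      rcases Nat.eq_zero_or_pos k with hk0 | hk1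
      · -- base case k+1 = 1
        subst hk0
        have hset : {ω | T 1 ω = m} = {ω | S 0 ω = m} := by
          ext ω; simp [hT]
        rw [hset, ← hμ, hform m hm]
        have : (m : ℝ) + ((0 : ℕ) + 1 : ℕ) * (r - 1) - 1 = (m : ℝ) + r - 2 := by
          push_cast; ring
        rw [this]
        simp [hA]
      · -- inductive step
        have hm1 : k + 1 ≤ m := hm
        rw [hconv k m]
        rw [ENNReal.toReal_sum (fun s _ => ENNReal.mul_ne_top (measure_ne_top P _) (measure_ne_top P _))]
        have hsub : Finset.Icc 1 (m - k) ⊆ Finset.range (m + 1) := by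
          intro s hs
          simp only [Finset.mem_Icc] at hs
          simp only [Finset.mem_range]
          omega
        rw [← Finset.sum_subset hsub]
        · have hterm : ∀ s ∈ Finset.Icc 1 (m - k),
              (P {ω | T k ω = m - s} * P {ω | S 0 ω = s}).toReal
              = (genChoose ((m : ℝ) - s + k * (r - 1) - 1) (m - s - k) *
                  genChoose ((s : ℝ) + r - 2) (s - 1)) * (A ^ (k + 1) * p ^ (m - (k + 1))) := by
            intro s hs
            simp only [Finset.mem_Icc] at hs
            rw [ENNReal.toReal_mul, ih hk1 (m - s) (by omega), ← hμ, hform s hs.1]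
            have hc : ((m - s : ℕ) : ℝ) = (m : ℝ) - s := by
              rw [Nat.cast_sub (by omega)]
            rw [hc]
            have hApow : A ^ k * A = A ^ (k + 1) := by rw [pow_succ]
            have hppow : p ^ (m - s - k) * p ^ (s - 1) = p ^ (m - (k + 1)) := by
              rw [← pow_add]
              congr 1
              omega
            calc genChoose ((m : ℝ) - s + k * (r - 1) - 1) (m - s - k) * A ^ k * p ^ (m - s - k) *
                  (genChoose ((s : ℝ) + r - 2) (s - 1) * A * p ^ (s - 1))
                = (genChoose ((m : ℝ) - s + k * (r - 1) - 1) (m - s - k) *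
                    genChoose ((s : ℝ) + r - 2) (s - 1)) *
                  ((A ^ k * A) * (p ^ (m - s - k) * p ^ (s - 1))) := by ring
              _ = _ := by rw [hApow, hppow]
          rw [Finset.sum_congr rfl hterm, ← Finset.sum_mul, key_sum r k m hm1]
          have : (m : ℝ) + ((k : ℝ) + 1) * (r - 1) - 1
              = (m : ℝ) + ((k + 1 : ℕ) : ℝ) * (r - 1) - 1 := by push_cast; ring
          rw [this]
          ring
        · intro s hsr hsn
          simp only [Finset.mem_range] at hsr
          simp only [Finset.mem_Icc, not_and_or, not_le] at hsn
          rcases hsn with h1 | h2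
          · have hs0 : s = 0 := by omega
            subst hs0
            have : (P {ω | S 0 ω = 0}).toReal = 0 := by rw [← hμ]; exact hμ0
            rw [ENNReal.toReal_mul, this, mul_zero]
          · have : P {ω | T k ω = m - s} = 0 := hTzero k (m - s) (by omega)
            rw [ENNReal.toReal_mul, this]
            simp
  -- decomposition of E n
  have hEdecomp : E n = ⋃ k ∈ Finset.Icc 1 n, {ω | T k ω = n} := by
    rw [hE]
    ext ω
    simp only [Set.mem_setOf_eq, Set.mem_iUnion, Finset.mem_Icc, exists_prop]
    constructor
    · rintro ⟨K, hK⟩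
      have hKT : T K ω = n := hK
      have h1 : 1 ≤ K := by
        by_contra h
        have : K = 0 := by omega
        subst this
        simp [hT] at hKT
        omega
      have h2 : K ≤ n := by have := hTge K ω; omega
      exact ⟨K, ⟨h1, h2⟩, hKT⟩
    · rintro ⟨k, _, h⟩
      exact ⟨k, h⟩
  have hPE : P (E n) = ∑ k ∈ Finset.Icc 1 n, P {ω | T k ω = n} := by
    rw [hEdecomp, measure_biUnion_finset]
    · intro a ha b hb hab
      simp only [Function.onFun]
      apply Set.disjoint_left.mpr
      rintro ω h1 h2
      simp only [Set.mem_setOf_eq] at h1 h2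
      rcases Nat.lt_or_ge a b with h | h
      · have := hTstrict ω h; omega
      · have hba : b < a := by omega
        have := hTstrict ω hba; omega
    · intro k hk
      exact (hTmeas k) (MeasurableSet.singleton _)
  rw [hPE, ENNReal.toReal_sum (fun k _ => measure_ne_top P _), Finset.mul_sum]
  refine Finset.sum_congr rfl fun k hk => ?_
  simp only [Finset.mem_Icc] at hk
  rw [key k hk.1 n hk.2]
  have hpk : p ^ (n - k) = p ^ n / p ^ k := by
    rw [pow_sub₀ p (ne_of_gt hp0) hk.2, div_eq_mul_inv]
  rw [hpk, div_pow]
  field_simp
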